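/- arXiv:1806.06218 — 4 statements merged into one kernel-verified Lean document; each statement's English description precedes it below -/
import Mathlib

section
/- For all real z ≥ 0, log Γ(1+z) = ∫₀¹ (1 - t·z - (1-t)^z) / (t · log(1-t)) dt. -/
open Real MeasureTheory Set Filter intervalIntegral

private lemma D_nonneg' (v : ℝ) : 0 ≤ v - (1 - exp (-v)) := by
  have := add_one_le_exp (-v); linarith

private lemma D_le' (v : ℝ) (hv : 0 ≤ v) : v - (1 - exp (-v)) ≤ v ^ 2 / 2 := by
  have hder : ∀ x : ℝ, HasDerivAt (fun v : ℝ => v ^ 2 / 2 - v - exp (-v))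
      (x - 1 + exp (-x)) x := by
    intro x
    have h1 : HasDerivAt (fun v : ℝ => v ^ 2 / 2) x x := by
      simpa using ((hasDerivAt_pow 2 x).div_const 2)
    have h2 : HasDerivAt (fun v : ℝ => exp (-v)) (-exp (-x)) x := by
      simpa using ((hasDerivAt_neg x).exp)
    have := (h1.sub (hasDerivAt_id x)).sub h2
    exact this.congr_deriv (by ring)
  have hmono : Monotone (fun v : ℝ => v ^ 2 / 2 - v - exp (-v)) := by
    apply monotone_of_deriv_nonneg
    · exact fun x => (hder x).differentiableAt
    · intro x
      rw [(hder x).deriv]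
      have := add_one_le_exp (-x); linarith
  have := hmono hv
  simp only at this
  have h0 : (0:ℝ) ^ 2 / 2 - 0 - exp (-0) = -1 := by norm_num
  rw [h0] at this
  linarith

private lemma integral_exp_mul'' (L a b : ℝ) (hL : L ≠ 0) :
    ∫ s in a..b, exp (s * L) = (exp (b * L) - exp (a * L)) / L := by
  have hder : ∀ x : ℝ, HasDerivAt (fun s : ℝ => exp (s * L) / L) (exp (x * L)) x := by
    intro x
    have h1 : HasDerivAt (fun s : ℝ => s * L) L x := hasDerivAt_mul_const L
    have h2 := (h1.exp).div_const L
    exact h2.congr_deriv (by field_simp)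
  have hcont : IntervalIntegrable (fun s : ℝ => exp (s * L)) volume a b :=
    (Real.continuous_exp.comp (continuous_id.mul continuous_const)).intervalIntegrable a b
  have := integral_eq_sub_of_hasDerivAt (fun x _ => hder x) hcont
  rw [this]; ring

private lemma rpow_sub_div_log' (x a b : ℝ) (hx : x ∈ Ioo (0:ℝ) 1) :
    (x ^ a - x ^ b) / Real.log x = ∫ s in b..a, x ^ s := by
  have hx0 : (0:ℝ) < x := hx.1
  have hL : Real.log x ≠ 0 := ne_of_lt (Real.log_neg hx0 hx.2)
  have h : ∀ s : ℝ, x ^ s = exp (s * Real.log x) := by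
    intro s; rw [Real.rpow_def_of_pos hx0, mul_comm]
  simp_rw [h]
  rw [integral_exp_mul'' _ _ _ hL]

private lemma J_eq' (a b : ℝ) (hb : 0 ≤ b) (hab : b ≤ a) :
    ∫ x in (0:ℝ)..1, (x ^ a - x ^ b) / Real.log x = Real.log (a+1) - Real.log (b+1) := by
  have ha : 0 ≤ a := hb.trans hab
  rw [intervalIntegral.integral_of_le zero_le_one, integral_Ioc_eq_integral_Ioo]
  have step1 : ∫ x in Ioo (0:ℝ) 1, (x ^ a - x ^ b) / Real.log x
      = ∫ x in Ioo (0:ℝ) 1, ∫ s in Ioc b a, x ^ s := by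
    refine setIntegral_congr_fun measurableSet_Ioo (fun x hx => ?_)
    rw [rpow_sub_div_log' x a b hx, intervalIntegral.integral_of_le hab]
  rw [step1]
  haveI : IsFiniteMeasure (volume.restrict (Ioo (0:ℝ) 1)) :=
    ⟨by rw [Measure.restrict_apply_univ]; exact measure_Ioo_lt_top⟩
  haveI : IsFiniteMeasure (volume.restrict (Ioc b a)) :=
    ⟨by rw [Measure.restrict_apply_univ]; exact measure_Ioc_lt_top⟩
  have hprod : (volume.restrict (Ioo (0:ℝ) 1)).prod (volume.restrict (Ioc b a))
      = ((volume : Measure ℝ).prod (volume : Measure ℝ)).restrict (Ioo (0:ℝ) 1 ×ˢ Ioc b a) :=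
    Measure.prod_restrict _ _
  have hmeas : MeasurableSet (Ioo (0:ℝ) 1 ×ˢ Ioc b a) :=
    measurableSet_Ioo.prod measurableSet_Ioc
  have hcont : ContinuousOn (fun p : ℝ × ℝ => p.1 ^ p.2) (Ioo (0:ℝ) 1 ×ˢ Ioc b a) := by
    intro p hp
    exact (Real.continuousAt_rpow p (Or.inl (ne_of_gt hp.1.1))).continuousWithinAt
  have hintegrable : Integrable (fun p : ℝ × ℝ => p.1 ^ p.2)
      ((volume.restrict (Ioo (0:ℝ) 1)).prod (volume.restrict (Ioc b a))) := by
    refine Integrable.mono' (integrable_const 1) ?_ ?_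
    · rw [hprod]; exact hcont.aestronglyMeasurable hmeas
    rw [hprod, ae_restrict_iff' hmeas]
    refine Eventually.of_forall (fun p hp => ?_)
    rw [Real.norm_eq_abs, abs_of_nonneg (Real.rpow_nonneg hp.1.1.le _)]
    exact Real.rpow_le_one hp.1.1.le hp.1.2.le (hb.trans hp.2.1.le)
  have swap := MeasureTheory.integral_integral_swap (f := fun x s => (x:ℝ) ^ s) hintegrable
  rw [swap]
  have step2 : ∫ s in Ioc b a, ∫ x in Ioo (0:ℝ) 1, x ^ s
      = ∫ s in Ioc b a, 1 / (s + 1) := by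
    refine setIntegral_congr_fun measurableSet_Ioc (fun s hs => ?_)
    have hs0 : (0:ℝ) ≤ s := hb.trans hs.1.le
    rw [← integral_Ioc_eq_integral_Ioo, ← intervalIntegral.integral_of_le zero_le_one]
    rw [integral_rpow (Or.inl (by linarith))]
    rw [Real.one_rpow, Real.zero_rpow (by linarith)]
    ring
  rw [step2, ← intervalIntegral.integral_of_le hab]
  have hder : ∀ x : ℝ, x ∈ uIcc b a → HasDerivAt (fun s : ℝ => Real.log (s+1)) (1/(x+1)) x := by
    intro x hx
    have hx0 : 0 ≤ x := by
      rw [uIcc_of_le hab] at hx; exact hb.trans hx.1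
    have h1 : HasDerivAt (fun s : ℝ => s + 1) 1 x := (hasDerivAt_id x).add_const 1
    have h2 := (Real.hasDerivAt_log (ne_of_gt (by linarith : (0:ℝ) < x + 1))).comp x h1
    simpa [one_div, Function.comp_def] using h2
  have hcont2 : IntervalIntegrable (fun s : ℝ => 1/(s+1)) volume b a := by
    apply ContinuousOn.intervalIntegrable
    intro s hs
    have hs0 : 0 ≤ s := by rw [uIcc_of_le hab] at hs; exact hb.trans hs.1
    exact (continuousAt_const.div ((continuous_id.add continuous_const).continuousAt)
      (ne_of_gt (by linarith : (0:ℝ) < s + 1))).continuousWithinAt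
  rw [integral_eq_sub_of_hasDerivAt hder hcont2]

-- bound |(x^a - x^b)/log x| ≤ |a - b|  on (0,1)
private lemma term_abs_le' (x a b : ℝ) (hx : x ∈ Ioo (0:ℝ) 1) (hb : 0 ≤ b) (hab : b ≤ a) :
    |(x ^ a - x ^ b) / Real.log x| ≤ a - b := by
  have hx0 : (0:ℝ) < x := hx.1
  have hL : Real.log x < 0 := Real.log_neg hx0 hx.2
  have h1 : x ^ a ≤ x ^ b := Real.rpow_le_rpow_of_exponent_ge hx0 hx.2.le hab
  have hxb1 : x ^ b ≤ 1 := Real.rpow_le_one hx0.le hx.2.le hb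
  have hxab : x ^ (a - b) ≤ 1 := Real.rpow_le_one hx0.le hx.2.le (by linarith)
  have hxab0 : 0 < x ^ (a - b) := Real.rpow_pos_of_pos hx0 _
  have hsplit : x ^ a = x ^ b * x ^ (a - b) := by
    rw [← Real.rpow_add hx0]; ring_nf
  have hlog : Real.log (x ^ (a-b)) = (a-b) * Real.log x := Real.log_rpow hx0 _
  have hkey : x ^ b - x ^ a ≤ (a - b) * (-Real.log x) := by
    have e1 : x ^ b - x ^ a = x ^ b * (1 - x ^ (a-b)) := by rw [hsplit]; ring
    have e2 : x ^ b * (1 - x ^ (a-b)) ≤ 1 - x ^ (a-b) := by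
      nlinarith [Real.rpow_nonneg hx0.le b]
    have e3 : 1 - x ^ (a-b) ≤ -Real.log (x ^ (a-b)) := by
      have := Real.log_le_sub_one_of_pos hxab0; linarith
    rw [hlog] at e3
    rw [e1]; nlinarith
  rw [abs_div, abs_of_neg hL]
  rw [abs_of_nonpos (by linarith : x ^ a - x ^ b ≤ 0)]
  rw [div_le_iff₀ (by linarith : (0:ℝ) < -Real.log x)]
  linarith

private lemma term_intInt' (a b : ℝ) (ha : 0 ≤ a) (hb : 0 ≤ b) :
    IntervalIntegrable (fun x : ℝ => (x ^ a - x ^ b) / Real.log x) volume 0 1 := by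
  rw [intervalIntegrable_iff_integrableOn_Ioo_of_le zero_le_one]
  have hcont : ContinuousOn (fun x : ℝ => (x ^ a - x ^ b) / Real.log x) (Ioo (0:ℝ) 1) := by
    intro x hx
    have hx0 := hx.1
    have hL : Real.log x ≠ 0 := ne_of_lt (Real.log_neg hx.1 hx.2)
    refine ContinuousWithinAt.div ?_ (Real.continuousAt_log (ne_of_gt hx0)).continuousWithinAt hL
    exact ((Real.continuousAt_rpow_const x a (Or.inl (ne_of_gt hx0))).sub
      (Real.continuousAt_rpow_const x b (Or.inl (ne_of_gt hx0)))).continuousWithinAt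
  refine Integrable.mono' (integrable_const |a - b|)
    (hcont.aestronglyMeasurable measurableSet_Ioo) ?_
  rw [ae_restrict_iff' measurableSet_Ioo]
  refine Eventually.of_forall (fun x hx => ?_)
  rw [Real.norm_eq_abs]
  rcases le_total b a with h | h
  · calc |(x ^ a - x ^ b) / Real.log x| ≤ a - b := term_abs_le' x a b hx hb h
      _ ≤ |a - b| := le_abs_self _
  · have : (x ^ a - x ^ b) / Real.log x = -((x ^ b - x ^ a) / Real.log x) := by ring
    rw [this, abs_neg]
    calc |(x ^ b - x ^ a) / Real.log x| ≤ b - a := term_abs_le' x b a hx ha h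
      _ ≤ |a - b| := by rw [abs_sub_comm]; exact le_abs_self _

-- the bound for c
private lemma c_bound' (z : ℝ) (hz : 0 ≤ z) (x : ℝ) (hx : x ∈ Ioo (0:ℝ) 1) :
    |((1 - x ^ z) + z * (x - 1)) / Real.log x| ≤ (3/2*(z+z^2) + 2*(1+z)) * (1 - x) := by
  have hL : Real.log x < 0 := Real.log_neg hx.1 hx.2
  set u := -Real.log x with hu
  have hu0 : 0 < u := by rw [hu]; linarith
  have hxe : x = exp (-u) := by rw [hu, neg_neg, Real.exp_log hx.1]
  have hxz : x ^ z = exp (-(z*u)) := by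
    rw [Real.rpow_def_of_pos hx.1]; congr 1; rw [hu]; ring
  have hDzu1 : 0 ≤ z*u - (1 - exp (-(z*u))) := D_nonneg' _
  have hDzu2 : z*u - (1 - exp (-(z*u))) ≤ (z*u)^2/2 := D_le' _ (mul_nonneg hz hu0.le)
  have hDu1 : 0 ≤ u - (1 - exp (-u)) := D_nonneg' _
  have hDu2 : u - (1 - exp (-u)) ≤ u^2/2 := D_le' _ hu0.le
  have habs : |Real.log x| = u := by rw [hu, abs_of_neg hL]
  rw [abs_div, habs, div_le_iff₀ hu0, hxz]
  rw [hxe]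
  clear_value u
  rcases le_total u 1 with hu1 | hu1
  · -- u ≤ 1 : use quadratic bounds
    have hexp_u : exp (-u) ≥ 1/3 := by
      have h1 : exp (-u) ≥ exp (-1) := Real.exp_le_exp.2 (by linarith)
      have h2 : exp (1:ℝ) ≤ 3 := by
        have := Real.exp_one_lt_d9; linarith
      have h3 : exp (-1) = (exp 1)⁻¹ := by rw [Real.exp_neg]
      have h4 : (exp 1)⁻¹ ≥ 1/3 := by
        rw [ge_iff_le, div_le_iff₀ (by norm_num : (0:ℝ) < 3)]
        rw [inv_mul_eq_div, le_div_iff₀ (Real.exp_pos 1)]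
        linarith
      linarith [h3 ▸ h1]
    have hgeom : u * exp (-u) ≤ 1 - exp (-u) := by
      have h1 := add_one_le_exp u
      have h2 : exp u * exp (-u) = 1 := by rw [← Real.exp_add]; simp
      nlinarith [Real.exp_pos (-u), Real.exp_pos u]
    have hlow : u/3 ≤ 1 - exp (-u) := by nlinarith
    have e1 : z * (u - (1 - exp (-u))) ≤ z * (u^2/2) := mul_le_mul_of_nonneg_left hDu2 hz
    have e2 : 0 ≤ z * (u - (1 - exp (-u))) := mul_nonneg hz hDu1
    have p1 : (3/2*(z+z^2)) * (u/3) ≤ (3/2*(z+z^2)) * (1 - exp (-u)) :=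
      mul_le_mul_of_nonneg_left hlow (by positivity)
    have p1' := mul_le_mul_of_nonneg_right p1 hu0.le
    have p2 : 0 ≤ (2*(1+z)) * (1 - exp (-u)) * u :=
      mul_nonneg (mul_nonneg (by linarith) (by linarith)) hu0.le
    have hMge : (z+z^2)*u^2/2 ≤ (3/2*(z+z^2) + 2*(1+z)) * (1 - exp (-u)) * u := by
      nlinarith [p1', p2]
    clear p1 p1' p2 hxe hxz habs hlow hgeom hexp_u
    have hz2u : 0 ≤ z^2 * u^2 := by positivity
    have hzu2 : 0 ≤ z * u^2 := by positivity
    rw [abs_le]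
    constructor <;> linarith [e1, e2, hDzu1, hDzu2, hMge, hz2u, hzu2]
  · -- u ≥ 1
    have hexp1 : exp (-u) ≤ exp (-1) := Real.exp_le_exp.2 (by linarith)
    have hhalf : exp (-1:ℝ) ≤ 1/2 := by
      rw [Real.exp_neg, inv_le_comm₀ (Real.exp_pos 1) (by norm_num)]
      have := Real.exp_one_gt_d9; linarith
    have h1 : 0 < exp (-(z*u)) := Real.exp_pos _
    have h2 : exp (-(z*u)) ≤ 1 := Real.exp_le_one_iff.2 (by nlinarith)
    have h3 : 0 < exp (-u) := Real.exp_pos _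
    have h4 : exp (-u) ≤ 1 := Real.exp_le_one_iff.2 (by linarith)
    have hhalf2 : 1/2 ≤ 1 - exp (-u) := by linarith
    have q1 : (1+z) ≤ 2*(1+z) * (1 - exp (-u)) := by
      have := mul_le_mul_of_nonneg_left hhalf2 (show (0:ℝ) ≤ 2*(1+z) by linarith)
      linarith
    have q2 : (1+z) ≤ 2*(1+z) * (1 - exp (-u)) * u := by
      have hb : (0:ℝ) ≤ 2*(1+z) * (1 - exp (-u)) := mul_nonneg (by linarith) (by linarith)
      have := mul_le_mul_of_nonneg_left hu1 hb
      linarith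
    have q3 : 0 ≤ (3/2*(z+z^2)) * (1 - exp (-u)) * u :=
      mul_nonneg (mul_nonneg (by positivity) (by linarith)) (by linarith)
    have h5 : z * exp (-u) ≤ z := by
      have := mul_le_mul_of_nonneg_left h4 hz; linarith
    have h6 : 0 ≤ z * exp (-u) := by positivity
    rw [abs_le]
    constructor <;> linarith [q2, q3, h1, h2, h5, h6]

private noncomputable def cR (z x : ℝ) : ℝ := ((1 - x ^ z) + z * (x - 1)) / Real.log x

private noncomputable def fR (z x : ℝ) : ℝ := (1 - (1-x)*z - x ^ z) / ((1-x) * Real.log x)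

private noncomputable def SR (z : ℝ) (N : ℕ) (x : ℝ) : ℝ :=
  ∑ n ∈ Finset.range N,
    ((x ^ (n:ℝ) - x ^ ((n:ℝ)+z)) / Real.log x + z * ((x ^ ((n:ℝ)+1) - x ^ (n:ℝ)) / Real.log x))

private noncomputable def AR (z : ℝ) (N : ℕ) : ℝ :=
  (∑ n ∈ Finset.range N, (Real.log ((n:ℝ)+1) - Real.log ((n:ℝ)+z+1)))
    + z * Real.log ((N:ℝ)+1)

private lemma SR_eq (z : ℝ) (N : ℕ) (x : ℝ) (hx : x ∈ Ioo (0:ℝ) 1) :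
    SR z N x = (∑ n ∈ Finset.range N, x ^ n) * cR z x := by
  have hx0 : (0:ℝ) < x := hx.1
  have hL : Real.log x ≠ 0 := ne_of_lt (Real.log_neg hx0 hx.2)
  rw [SR, cR, Finset.sum_mul]
  refine Finset.sum_congr rfl (fun n _ => ?_)
  have h1 : x ^ ((n:ℝ)+z) = x ^ (n:ℝ) * x ^ z := Real.rpow_add hx0 _ _
  have h2 : x ^ ((n:ℝ)+1) = x ^ (n:ℝ) * x := by
    rw [Real.rpow_add hx0, Real.rpow_one]
  have h3 : x ^ (n:ℝ) = x ^ n := Real.rpow_natCast x n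
  rw [h1, h2, h3]
  field_simp

private lemma SR_tendsto (z : ℝ) (x : ℝ) (hx : x ∈ Ioo (0:ℝ) 1) :
    Filter.Tendsto (fun N => SR z N x) atTop (nhds (fR z x)) := by
  have hx0 : (0:ℝ) < x := hx.1
  have hL : Real.log x ≠ 0 := ne_of_lt (Real.log_neg hx0 hx.2)
  have h1x : (1:ℝ) - x ≠ 0 := by have := hx.2; intro h; linarith [sub_eq_zero.mp h]
  have hgeo : HasSum (fun n : ℕ => x ^ n) (1 - x)⁻¹ :=
    hasSum_geometric_of_lt_one hx0.le hx.2
  have hsum : Filter.Tendsto (fun N => ∑ n ∈ Finset.range N, x ^ n) atTop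
      (nhds ((1-x)⁻¹)) := hgeo.tendsto_sum_nat
  have := hsum.mul_const (cR z x)
  have hfc : (1-x)⁻¹ * cR z x = fR z x := by
    rw [cR, fR]
    field_simp
    ring
  rw [hfc] at this
  exact Filter.Tendsto.congr (fun N => (SR_eq z N x hx).symm) this

private lemma SR_bound (z : ℝ) (hz : 0 ≤ z) (N : ℕ) (x : ℝ) (hx : x ∈ Ioo (0:ℝ) 1) :
    |SR z N x| ≤ 3/2*(z+z^2) + 2*(1+z) := by
  have hx0 : (0:ℝ) < x := hx.1
  have h1x : (0:ℝ) < 1 - x := by linarith [hx.2]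
  have hgeo : HasSum (fun n : ℕ => x ^ n) (1 - x)⁻¹ :=
    hasSum_geometric_of_lt_one hx0.le hx.2
  have hsum_le : ∑ n ∈ Finset.range N, x ^ n ≤ (1-x)⁻¹ :=
    sum_le_hasSum (Finset.range N) (fun i _ => pow_nonneg hx0.le i) hgeo
  have hsum_nn : 0 ≤ ∑ n ∈ Finset.range N, x ^ n :=
    Finset.sum_nonneg (fun i _ => pow_nonneg hx0.le i)
  have hcb := c_bound' z hz x hx
  rw [SR_eq z N x hx, abs_mul, abs_of_nonneg hsum_nn]
  calc (∑ n ∈ Finset.range N, x ^ n) * |cR z x|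
      ≤ (1-x)⁻¹ * ((3/2*(z+z^2) + 2*(1+z)) * (1 - x)) := by
        exact mul_le_mul hsum_le hcb (abs_nonneg _) (inv_nonneg.2 h1x.le)
    _ = 3/2*(z+z^2) + 2*(1+z) := by field_simp

private lemma SR_meas (z : ℝ) (N : ℕ) :
    AEStronglyMeasurable (SR z N) (volume.restrict (Ioo (0:ℝ) 1)) := by
  refine ContinuousOn.aestronglyMeasurable ?_ measurableSet_Ioo
  apply continuousOn_finset_sum
  intro n _
  intro x hx
  have hx0 : (0:ℝ) < x := hx.1
  have hL : Real.log x ≠ 0 := ne_of_lt (Real.log_neg hx0 hx.2)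
  have hlog : ContinuousWithinAt Real.log (Ioo (0:ℝ) 1) x :=
    (Real.continuousAt_log (ne_of_gt hx0)).continuousWithinAt
  have hr : ∀ a : ℝ, ContinuousWithinAt (fun y : ℝ => y ^ a) (Ioo (0:ℝ) 1) x :=
    fun a => (Real.continuousAt_rpow_const x a (Or.inl (ne_of_gt hx0))).continuousWithinAt
  exact (((hr _).sub (hr _)).div hlog hL).add
    (continuousWithinAt_const.mul (((hr _).sub (hr _)).div hlog hL))

private lemma SR_integral (z : ℝ) (hz : 0 ≤ z) (N : ℕ) :
    ∫ x in Ioo (0:ℝ) 1, SR z N x = AR z N := by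
  have hconv : ∫ x in Ioo (0:ℝ) 1, SR z N x = ∫ x in (0:ℝ)..1, SR z N x := by
    rw [intervalIntegral.integral_of_le zero_le_one, integral_Ioc_eq_integral_Ioo]
  rw [hconv]
  have hii1 : ∀ n : ℕ, IntervalIntegrable
      (fun x : ℝ => (x ^ (n:ℝ) - x ^ ((n:ℝ)+z)) / Real.log x) volume 0 1 :=
    fun n => term_intInt' (n:ℝ) ((n:ℝ)+z) (Nat.cast_nonneg n) (by positivity)
  have hii2 : ∀ n : ℕ, IntervalIntegrable
      (fun x : ℝ => (x ^ ((n:ℝ)+1) - x ^ (n:ℝ)) / Real.log x) volume 0 1 :=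
    fun n => term_intInt' ((n:ℝ)+1) (n:ℝ) (by positivity) (Nat.cast_nonneg n)
  have hterm : ∀ n : ℕ, (∫ x in (0:ℝ)..1, ((x ^ (n:ℝ) - x ^ ((n:ℝ)+z)) / Real.log x
        + z * ((x ^ ((n:ℝ)+1) - x ^ (n:ℝ)) / Real.log x)))
      = (Real.log ((n:ℝ)+1) - Real.log ((n:ℝ)+z+1))
        + z * (Real.log ((n:ℝ)+1+1) - Real.log ((n:ℝ)+1)) := by
    intro n
    rw [intervalIntegral.integral_add (hii1 n) ((hii2 n).const_mul z),
      intervalIntegral.integral_const_mul]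
    have j1 := J_eq' ((n:ℝ)+z) (n:ℝ) (Nat.cast_nonneg n) (by linarith)
    have j2 := J_eq' ((n:ℝ)+1) (n:ℝ) (Nat.cast_nonneg n) (by linarith)
    have hneg : (∫ x in (0:ℝ)..1, (x ^ (n:ℝ) - x ^ ((n:ℝ)+z)) / Real.log x)
        = -(∫ x in (0:ℝ)..1, (x ^ ((n:ℝ)+z) - x ^ (n:ℝ)) / Real.log x) := by
      rw [← intervalIntegral.integral_neg]
      congr 1; funext x; ring
    rw [hneg, j1, j2]
    ring
  have hsum : ∫ x in (0:ℝ)..1, SR z N x = ∑ n ∈ Finset.range N,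
      ∫ x in (0:ℝ)..1, ((x ^ (n:ℝ) - x ^ ((n:ℝ)+z)) / Real.log x
        + z * ((x ^ ((n:ℝ)+1) - x ^ (n:ℝ)) / Real.log x)) := by
    unfold SR
    exact intervalIntegral.integral_finset_sum
      (fun n _ => (hii1 n).add ((hii2 n).const_mul z))
  rw [hsum]
  have : ∑ n ∈ Finset.range N, (∫ x in (0:ℝ)..1, ((x ^ (n:ℝ) - x ^ ((n:ℝ)+z)) / Real.log x
        + z * ((x ^ ((n:ℝ)+1) - x ^ (n:ℝ)) / Real.log x)))
      = ∑ n ∈ Finset.range N, ((Real.log ((n:ℝ)+1) - Real.log ((n:ℝ)+z+1))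
        + z * (Real.log ((n:ℝ)+1+1) - Real.log ((n:ℝ)+1))) :=
    Finset.sum_congr rfl (fun n _ => hterm n)
  rw [this, Finset.sum_add_distrib, ← Finset.mul_sum]
  have tel : ∑ n ∈ Finset.range N,
      (Real.log ((n:ℝ)+1+1) - Real.log ((n:ℝ)+1)) = Real.log ((N:ℝ)+1) := by
    have h := Finset.sum_range_sub (f := fun i : ℕ => Real.log ((i:ℝ)+1)) N
    push_cast at h
    norm_num at h
    rw [Finset.sum_sub_distrib]
    exact h
  rw [tel]
  rfl

private lemma AR_identity (z : ℝ) (n : ℕ) :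
    AR z n = Real.BohrMollerup.logGammaSeq (1+z) n
      + z * (Real.log ((n:ℝ)+1) - Real.log n)
      + (Real.log ((n:ℝ)+z+1) - Real.log n) := by
  unfold AR Real.BohrMollerup.logGammaSeq
  have hfact : Real.log (Nat.factorial n : ℝ) = ∑ m ∈ Finset.range n, Real.log ((m:ℝ)+1) := by
    have h1 : ((Nat.factorial n : ℕ) : ℝ) = ∏ m ∈ Finset.range n, ((m:ℝ)+1) := by
      rw [← Finset.prod_range_add_one_eq_factorial]
      push_cast
      rfl
    rw [h1, Real.log_prod (fun m _ => by positivity)]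
  have hsucc : ∑ m ∈ Finset.range (n+1), Real.log (1+z+(m:ℝ))
      = (∑ m ∈ Finset.range n, Real.log (1+z+(m:ℝ))) + Real.log (1+z+(n:ℝ)) :=
    Finset.sum_range_succ _ n
  have hmatch : ∀ m : ℕ, Real.log (1+z+(m:ℝ)) = Real.log ((m:ℝ)+z+1) := by
    intro m; congr 1; ring
  have hmatch2 : Real.log (1+z+(n:ℝ)) = Real.log ((n:ℝ)+z+1) := by congr 1; ring
  rw [hfact, hsucc, hmatch2]
  rw [Finset.sum_congr rfl (fun m _ => hmatch m), Finset.sum_sub_distrib]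
  ring

private lemma AR_tendsto (z : ℝ) (hz : 0 ≤ z) :
    Filter.Tendsto (AR z) atTop (nhds (Real.log (Real.Gamma (1+z)))) := by
  have h1 := Real.BohrMollerup.tendsto_log_gamma (show (0:ℝ) < 1+z by linarith)
  have h2 := tendsto_log_nat_add_one_sub_log.const_mul z
  have h3 : Filter.Tendsto (fun n : ℕ => Real.log ((n:ℝ)+z+1) - Real.log n) atTop
      (nhds 0) := by
    have hbase : Filter.Tendsto (fun n : ℕ => 1 + (z+1)/(n:ℝ)) atTop (nhds 1) := by
      have := tendsto_const_div_atTop_nhds_zero_nat (z+1)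
      simpa using Filter.Tendsto.const_add 1 this
    have hlog := ((Real.continuousAt_log one_ne_zero).tendsto).comp hbase
    rw [Real.log_one] at hlog
    refine Filter.Tendsto.congr' ?_ hlog
    filter_upwards [Filter.eventually_gt_atTop 0] with n hn
    have hn0 : (0:ℝ) < n := by exact_mod_cast hn
    have heq : 1 + (z+1)/(n:ℝ) = ((n:ℝ)+z+1)/n := by field_simp; ring
    show Real.log (1 + (z+1)/(n:ℝ)) = Real.log ((n:ℝ)+z+1) - Real.log n
    rw [heq, Real.log_div (by positivity) (ne_of_gt hn0)]
  have hcomb := (h1.add h2).add h3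
  norm_num at hcomb
  refine Filter.Tendsto.congr (fun n => ?_) hcomb
  rw [AR_identity z n]

theorem log_gamma_integral_repr (z : ℝ) (hz : 0 ≤ z) :
    Real.log (Real.Gamma (1 + z)) =
      ∫ t in (0:ℝ)..1, (1 - t * z - (1 - t) ^ z) / (t * Real.log (1 - t)) := by
  haveI : IsFiniteMeasure (volume.restrict (Ioo (0:ℝ) 1)) :=
    ⟨by rw [Measure.restrict_apply_univ]; exact measure_Ioo_lt_top⟩
  have h_bound : ∀ N : ℕ, ∀ᵐ x ∂(volume.restrict (Ioo (0:ℝ) 1)),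
      ‖SR z N x‖ ≤ 3/2*(z+z^2) + 2*(1+z) := by
    intro N
    rw [ae_restrict_iff' measurableSet_Ioo]
    exact Filter.Eventually.of_forall (fun x hx => by
      simpa [Real.norm_eq_abs] using SR_bound z hz N x hx)
  have h_lim : ∀ᵐ x ∂(volume.restrict (Ioo (0:ℝ) 1)),
      Filter.Tendsto (fun N => SR z N x) atTop (nhds (fR z x)) := by
    rw [ae_restrict_iff' measurableSet_Ioo]
    exact Filter.Eventually.of_forall (fun x hx => SR_tendsto z x hx)
  have hdct := MeasureTheory.tendsto_integral_of_dominated_convergence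
    (μ := volume.restrict (Ioo (0:ℝ) 1)) (F := SR z) (f := fR z)
    (fun _ => 3/2*(z+z^2) + 2*(1+z)) (fun N => SR_meas z N)
    (integrable_const _) h_bound h_lim
  have hrw : (fun N => ∫ x in Ioo (0:ℝ) 1, SR z N x) = AR z :=
    funext (fun N => SR_integral z hz N)
  rw [hrw] at hdct
  have hval : ∫ x in Ioo (0:ℝ) 1, fR z x = Real.log (Real.Gamma (1+z)) :=
    tendsto_nhds_unique hdct (AR_tendsto z hz)
  have hsub : (fun t : ℝ => (1 - t * z - (1 - t) ^ z) / (t * Real.log (1 - t)))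
      = fun t : ℝ => fR z (1 - t) := by
    funext t
    show _ = (1 - (1-(1-t))*z - (1-t) ^ z) / ((1-(1-t)) * Real.log (1-t))
    rw [sub_sub_cancel]
  rw [hsub]
  rw [intervalIntegral.integral_comp_sub_left (fun x => fR z x) 1]
  norm_num
  rw [intervalIntegral.integral_of_le zero_le_one, integral_Ioc_eq_integral_Ioo, hval]
end

section
/- For all p ∈ (0,1) and all u > 0, (1-p)/(e^{up} - 1) - 1/(e^{up/(1-p)} - 1) ≥ 0. -/
theorem exp_inequality_split1 (p u : ℝ) (hp : p ∈ Set.Ioo (0:ℝ) 1) (hu : 0 < u) :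
    0 ≤ (1 - p) / (Real.exp (u * p) - 1) - 1 / (Real.exp (u * p / (1 - p)) - 1) := by
  obtain ⟨hp0, hp1⟩ := hp
  have hc : 0 < 1 - p := by linarith
  have ha : 0 < u * p := mul_pos hu hp0
  have hs0 : 0 < u * p / (1 - p) := div_pos ha hc
  have hE1 : 0 < Real.exp (u * p) - 1 := by
    have := Real.add_one_lt_exp (ne_of_gt ha)
    linarith
  have hE2 : 0 < Real.exp (u * p / (1 - p)) - 1 := by
    have := Real.add_one_lt_exp (ne_of_gt hs0)
    linarith
  rw [sub_nonneg, div_le_div_iff₀ hE2 hE1]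
  -- goal: 1 * (exp (u*p) - 1) ≤ (1-p) * (exp (u*p/(1-p)) - 1)
  have key : Real.exp (u * p) ≤ (1 - p) * Real.exp (u * p / (1 - p)) + p := by
    have hconv := convexOn_exp.2 (Set.mem_univ (u * p / (1 - p))) (Set.mem_univ 0)
      (le_of_lt hc) (le_of_lt hp0) (by ring)
    simp only [smul_eq_mul, mul_zero, add_zero, Real.exp_zero, mul_one] at hconv
    have : (1 - p) * (u * p / (1 - p)) = u * p := by field_simp
    rw [this] at hconv
    linarith
  nlinarith
end

section
/- For all p ∈ (0,1), all integers x ≥ 1, and all u > 0, the quantity P_x(u) = 1/(1 - e^{-up}) - 1/(1 - e^{-up/(1-p)}) - e^{-ux}/(1 - e^{-u}) is nonnegative. -/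
open Real Set Filter

/-- The classic inequality `2(e^h - 1) ≤ h(e^h + 1)` for `h ≥ 0`. -/
lemma key_scalar (h : ℝ) (hh : 0 ≤ h) : 2 * (Real.exp h - 1) ≤ h * (Real.exp h + 1) := by
  set k : ℝ → ℝ := fun t => t * (Real.exp t + 1) - 2 * (Real.exp t - 1) with hk
  have hderiv : ∀ t : ℝ, HasDerivAt k (1 + (t - 1) * Real.exp t) t := by
    intro t
    have h1 : HasDerivAt (fun t : ℝ => t * (Real.exp t + 1))
        (1 * (Real.exp t + 1) + t * Real.exp t) t :=
      (hasDerivAt_id t).mul ((Real.hasDerivAt_exp t).add_const 1)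
    have h2 : HasDerivAt (fun t : ℝ => 2 * (Real.exp t - 1)) (2 * Real.exp t) t :=
      ((Real.hasDerivAt_exp t).sub_const 1).const_mul 2
    have := h1.sub h2
    refine this.congr_deriv ?_
    ring
  have hmono : Monotone k := by
    apply monotone_of_deriv_nonneg
    · exact fun t => (hderiv t).differentiableAt
    · intro t
      rw [(hderiv t).deriv]
      have hle : (1 - t) * Real.exp t ≤ 1 := by
        have h1 : 1 - t ≤ Real.exp (-t) := by
          have := Real.add_one_le_exp (-t); linarith
        have h2 : (1 - t) * Real.exp t ≤ Real.exp (-t) * Real.exp t :=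
          mul_le_mul_of_nonneg_right h1 (Real.exp_pos t).le
        rwa [← Real.exp_add, neg_add_cancel, Real.exp_zero] at h2
      nlinarith
  have h0 : k 0 = 0 := by simp [hk]
  have hm := hmono hh
  rw [h0] at hm
  simp only [hk] at hm
  linarith

noncomputable def Fsup : ℝ → ℝ := fun s => (Real.exp s⁻¹ - 1)⁻¹

lemma exp_inv_gt_one {s : ℝ} (hs : 0 < s) : 1 < Real.exp s⁻¹ :=
  Real.one_lt_exp_iff.mpr (inv_pos.mpr hs)

lemma continuousAt_Fsup {s : ℝ} (hs : 0 < s) : ContinuousAt Fsup s := by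
  have hE : 1 < Real.exp s⁻¹ := exp_inv_gt_one hs
  have hEne : Real.exp s⁻¹ - 1 ≠ 0 := by linarith
  exact ((Real.continuous_exp.continuousAt.comp (continuousAt_inv₀ hs.ne')).sub
    continuousAt_const).inv₀ hEne

lemma Fsup_zero : Fsup 0 = 0 := by simp [Fsup]

lemma continuousWithinAt_Fsup_zero : ContinuousWithinAt Fsup (Set.Ici (0:ℝ)) 0 := by
  have h0 : Fsup 0 = 0 := Fsup_zero
  unfold ContinuousWithinAt
  rw [h0, ← Set.Ioi_insert, nhdsWithin_insert, Filter.tendsto_sup]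
  constructor
  · simpa [h0] using (tendsto_pure_nhds Fsup 0)
  · have h1 : Tendsto (fun y : ℝ => y⁻¹) (nhdsWithin 0 (Set.Ioi 0)) atTop :=
      tendsto_inv_nhdsGT_zero
    have h2 : Tendsto (fun y : ℝ => Real.exp y⁻¹ - 1) (nhdsWithin 0 (Set.Ioi 0)) atTop :=
      (tendsto_atTop_add_const_right _ (-1) (Real.tendsto_exp_atTop.comp h1)).congr
        (fun y => by simp [Function.comp, sub_eq_add_neg])
    exact h2.inv_tendsto_atTop

/-- First derivative of `Fsup` on `(0, ∞)`. -/
lemma Fsup_hasDerivAt {s : ℝ} (hs : 0 < s) :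
    HasDerivAt Fsup (Real.exp s⁻¹ / (s ^ 2 * (Real.exp s⁻¹ - 1) ^ 2)) s := by
  have hE : 1 < Real.exp s⁻¹ := exp_inv_gt_one hs
  have hEne : Real.exp s⁻¹ - 1 ≠ 0 := by linarith
  have h1 : HasDerivAt (fun y : ℝ => y⁻¹) (-(s ^ 2)⁻¹) s := hasDerivAt_inv hs.ne'
  have h2 : HasDerivAt (fun y : ℝ => Real.exp y⁻¹ - 1) (Real.exp s⁻¹ * -(s ^ 2)⁻¹) s :=
    (((Real.hasDerivAt_exp s⁻¹).comp s h1)).sub_const 1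
  have h3 := h2.inv hEne
  refine h3.congr_deriv ?_
  field_simp

noncomputable def Fsup1 : ℝ → ℝ := fun s => Real.exp s⁻¹ / (s ^ 2 * (Real.exp s⁻¹ - 1) ^ 2)

/-- Derivative of `Fsup1` on `(0, ∞)`. -/
lemma Fsup1_hasDerivAt {s : ℝ} (hs : 0 < s) :
    HasDerivAt Fsup1
      (Real.exp s⁻¹ * (Real.exp s⁻¹ + 1 - 2 * s * (Real.exp s⁻¹ - 1)) /
        (s ^ 4 * (Real.exp s⁻¹ - 1) ^ 3)) s := by
  have hE : 1 < Real.exp s⁻¹ := exp_inv_gt_one hs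
  have hEne : Real.exp s⁻¹ - 1 ≠ 0 := by linarith
  have h1 : HasDerivAt (fun y : ℝ => y⁻¹) (-(s ^ 2)⁻¹) s := hasDerivAt_inv hs.ne'
  have hExp : HasDerivAt (fun y : ℝ => Real.exp y⁻¹) (Real.exp s⁻¹ * -(s ^ 2)⁻¹) s :=
    (Real.hasDerivAt_exp s⁻¹).comp s h1
  have hsq : HasDerivAt (fun y : ℝ => y ^ 2) (2 * s) s := by
    simpa using hasDerivAt_pow 2 s
  have hEm1 : HasDerivAt (fun y : ℝ => (Real.exp y⁻¹ - 1) ^ 2)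
      (2 * (Real.exp s⁻¹ - 1) * (Real.exp s⁻¹ * -(s ^ 2)⁻¹)) s := by
    have := (hExp.sub_const 1).pow 2
    refine this.congr_deriv ?_
    ring
  have hden : HasDerivAt (fun y : ℝ => y ^ 2 * (Real.exp y⁻¹ - 1) ^ 2)
      (2 * s * (Real.exp s⁻¹ - 1) ^ 2 +
        s ^ 2 * (2 * (Real.exp s⁻¹ - 1) * (Real.exp s⁻¹ * -(s ^ 2)⁻¹))) s :=
    hsq.mul hEm1
  have hdne : s ^ 2 * (Real.exp s⁻¹ - 1) ^ 2 ≠ 0 := by positivity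
  have := hExp.div hden hdne
  refine this.congr_deriv ?_
  symm
  have hsne : s ≠ 0 := hs.ne'
  have hA : s ^ 4 * (Real.exp s⁻¹ - 1) ^ 3 ≠ 0 := by positivity
  have hB : (s ^ 2 * (Real.exp s⁻¹ - 1) ^ 2) ^ 2 ≠ 0 := by positivity
  rw [div_eq_div_iff hA hB]
  field_simp
  ring

lemma Fsup_convex : ConvexOn ℝ (Set.Ici (0 : ℝ)) Fsup := by
  have hint : interior (Set.Ici (0 : ℝ)) = Set.Ioi 0 := interior_Ici
  apply convexOn_of_hasDerivWithinAt2_nonneg (f' := Fsup1)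
    (f'' := fun s => Real.exp s⁻¹ * (Real.exp s⁻¹ + 1 - 2 * s * (Real.exp s⁻¹ - 1)) /
      (s ^ 4 * (Real.exp s⁻¹ - 1) ^ 3)) (convex_Ici 0)
  · -- continuity
    intro s hs
    rcases eq_or_lt_of_le (Set.mem_Ici.mp hs : (0:ℝ) ≤ s) with h0 | h0
    · rw [← h0]
      exact continuousWithinAt_Fsup_zero
    · exact (continuousAt_Fsup h0).continuousWithinAt
  · intro s hs
    rw [hint] at hs
    exact (Fsup_hasDerivAt hs).hasDerivWithinAt
  · intro s hs
    rw [hint] at hs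
    exact (Fsup1_hasDerivAt hs).hasDerivWithinAt
  · intro s hs
    rw [hint] at hs
    have hE : 1 < Real.exp s⁻¹ := exp_inv_gt_one hs
    have hnum : 0 ≤ Real.exp s⁻¹ + 1 - 2 * s * (Real.exp s⁻¹ - 1) := by
      have hk := key_scalar s⁻¹ (inv_pos.mpr hs).le
      have hs' : s * s⁻¹ = 1 := mul_inv_cancel₀ hs.ne'
      have h2 : s * (2 * (Real.exp s⁻¹ - 1)) ≤ s * (s⁻¹ * (Real.exp s⁻¹ + 1)) :=
        mul_le_mul_of_nonneg_left hk hs.le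
      have h3 : s * (s⁻¹ * (Real.exp s⁻¹ + 1)) = Real.exp s⁻¹ + 1 := by
        rw [← mul_assoc, hs', one_mul]
      rw [h3] at h2
      linarith
    have hd : 0 ≤ s ^ 4 * (Real.exp s⁻¹ - 1) ^ 3 := by
      have hE1 : (0:ℝ) ≤ Real.exp s⁻¹ - 1 := by linarith
      positivity
    exact div_nonneg (mul_nonneg (Real.exp_pos _).le hnum) hd

lemma Fsup_superadd {s t : ℝ} (hs : 0 < s) (ht : 0 < t) :
    Fsup s + Fsup t ≤ Fsup (s + t) := by
  have hst : 0 < s + t := by linarith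
  have h0mem : (0:ℝ) ∈ Set.Ici (0:ℝ) := Set.mem_Ici.mpr le_rfl
  have hstmem : s + t ∈ Set.Ici (0:ℝ) := Set.mem_Ici.mpr hst.le
  have h1 := Fsup_convex.2 h0mem hstmem (div_nonneg ht.le hst.le) (div_nonneg hs.le hst.le)
    (by field_simp <;> ring)
  have h2 := Fsup_convex.2 h0mem hstmem (div_nonneg hs.le hst.le) (div_nonneg ht.le hst.le)
    (by field_simp <;> ring)
  simp only [smul_eq_mul, mul_zero, zero_add, Fsup_zero] at h1 h2
  have harg1 : s / (s + t) * (s + t) = s := by field_simp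
  have harg2 : t / (s + t) * (s + t) = t := by field_simp
  rw [harg1] at h1
  rw [harg2] at h2
  have hsum : s / (s + t) * Fsup (s + t) + t / (s + t) * Fsup (s + t) = Fsup (s + t) := by
    rw [← add_mul]
    have : s / (s + t) + t / (s + t) = 1 := by field_simp
    rw [this, one_mul]
  linarith

lemma key_ineq {a b c : ℝ} (ha : 0 < a) (hb : 0 < b) (hc : 0 < c)
    (habc : a⁻¹ = b⁻¹ + c⁻¹) :
    1 / (Real.exp b - 1) + 1 / (Real.exp c - 1) ≤ 1 / (Real.exp a - 1) := by
  have h := Fsup_superadd (inv_pos.mpr hb) (inv_pos.mpr hc)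
  rw [← habc] at h
  simpa [Fsup, inv_inv, one_div] using h

theorem Px_nonneg (p : ℝ) (hp : p ∈ Set.Ioo (0:ℝ) 1) (x : ℕ) (hx : 1 ≤ x) (u : ℝ) (hu : 0 < u) :
    0 ≤ 1 / (1 - Real.exp (-(u * p))) - 1 / (1 - Real.exp (-(u * p / (1 - p))))
        - Real.exp (-(u * x)) / (1 - Real.exp (-u)) := by
  obtain ⟨hp0, hp1⟩ := hp
  have h1p : 0 < 1 - p := by linarith
  have ha : 0 < u * p := mul_pos hu hp0
  have hb : 0 < u * p / (1 - p) := div_pos ha h1p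
  -- rewrite 1/(1 - e^{-y}) = 1 + 1/(e^y - 1)
  have hformula : ∀ y : ℝ, 0 < y →
      1 / (1 - Real.exp (-y)) = 1 + 1 / (Real.exp y - 1) := by
    intro y hy
    have hE : 1 < Real.exp y := Real.one_lt_exp_iff.mpr hy
    have hE0 : Real.exp y ≠ 0 := (Real.exp_pos y).ne'
    have hE1 : Real.exp y - 1 ≠ 0 := by linarith
    have hinv : Real.exp (-y) < 1 := Real.exp_lt_one_iff.mpr (by linarith)
    have hne : 1 - (Real.exp y)⁻¹ ≠ 0 := by
      rw [← Real.exp_neg]; linarith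
    rw [Real.exp_neg]
    field_simp
    ring
  -- bound last term
  have hx1 : (1:ℝ) ≤ (x:ℝ) := by exact_mod_cast hx
  have hux : u ≤ u * x := by nlinarith
  have hEu : 1 < Real.exp u := Real.one_lt_exp_iff.mpr hu
  have hden : 0 < 1 - Real.exp (-u) := by
    have : Real.exp (-u) < 1 := Real.exp_lt_one_iff.mpr (by linarith)
    linarith
  have hlast : Real.exp (-(u * x)) / (1 - Real.exp (-u)) ≤ 1 / (Real.exp u - 1) := by
    have h1 : Real.exp (-(u * x)) ≤ Real.exp (-u) := Real.exp_le_exp.mpr (by linarith)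
    have h2 : Real.exp (-(u * x)) / (1 - Real.exp (-u)) ≤
        Real.exp (-u) / (1 - Real.exp (-u)) := by
      exact div_le_div_of_nonneg_right h1 hden.le
    have heq : Real.exp (-u) / (1 - Real.exp (-u)) = 1 / (Real.exp u - 1) := by
      have hE0 : Real.exp u ≠ 0 := (Real.exp_pos u).ne'
      have hE1 : Real.exp u - 1 ≠ 0 := by linarith
      have hne : 1 - Real.exp (-u) ≠ 0 := hden.ne'
      rw [Real.exp_neg] at hne ⊢
      field_simp
    linarith
  have habc : (u * p)⁻¹ = (u * p / (1 - p))⁻¹ + u⁻¹ := by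
    field_simp
    ring
  have hkey := key_ineq ha hb hu habc
  rw [hformula (u * p) ha, hformula (u * p / (1 - p)) hb]
  linarith
end

section
/- For p ∈ (0,1) and integer x ≥ 1, define f_x(y) = log( C(y/p - 1, y) / C(y + x - 1, y) ) for real y > 0, where C(a, y) = Γ(a+1)/(Γ(y+1)Γ(a-y+1)) is the generalized binomial coefficient. Then f_x is convex on (0, ∞). -/
open Real Set Filter Topology

/-- Generalized binomial coefficient `C(a, y) = Γ(a+1)/(Γ(y+1)Γ(a-y+1))`. -/
noncomputable def genBinom (a y : ℝ) : ℝ :=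
  Real.Gamma (a + 1) / (Real.Gamma (y + 1) * Real.Gamma (a - y + 1))

lemma pair_convex {c d : ℝ} (hd : 0 ≤ d) (hdc : d ≤ c) :
    ConvexOn ℝ (Set.Ioi (0:ℝ)) (fun y => Real.log (y + c) - Real.log (y + d)) := by
  have hc : 0 ≤ c := hd.trans hdc
  have key : ∀ e : ℝ, 0 ≤ e → ∀ y ∈ Set.Ioi (0:ℝ),
      HasDerivAt (fun y : ℝ => Real.log (y + e)) ((y + e)⁻¹) y := by
    intro e he y hy
    have hy' : (0:ℝ) < y := hy
    have h1 : HasDerivAt (fun y : ℝ => y + e) 1 y := (hasDerivAt_id y).add_const e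
    have := (Real.hasDerivAt_log (by positivity : y + e ≠ 0)).comp y h1
    simpa [Function.comp_def] using this
  have keyf : ∀ y ∈ Set.Ioi (0:ℝ),
      HasDerivAt (fun y : ℝ => Real.log (y + c) - Real.log (y + d))
        ((y + c)⁻¹ - (y + d)⁻¹) y := fun y hy => (key c hc y hy).sub (key d hd y hy)
  have key2 : ∀ e : ℝ, 0 ≤ e → ∀ y ∈ Set.Ioi (0:ℝ),
      HasDerivAt (fun y : ℝ => (y + e)⁻¹) (-((y+e)^2)⁻¹) y := by
    intro e he y hy
    have hy' : (0:ℝ) < y := hy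
    have h1 : HasDerivAt (fun y : ℝ => y + e) 1 y := (hasDerivAt_id y).add_const e
    have := (hasDerivAt_inv (by positivity : y + e ≠ 0)).comp y h1
    simpa [Function.comp_def] using this
  have hderiv : ∀ y ∈ Set.Ioi (0:ℝ),
      deriv (fun y : ℝ => Real.log (y + c) - Real.log (y + d)) y
        = (y + c)⁻¹ - (y + d)⁻¹ := fun y hy => (keyf y hy).deriv
  apply convexOn_of_deriv2_nonneg (convex_Ioi 0)
  · exact fun y hy => ((keyf y hy).continuousAt).continuousWithinAt
  · rw [interior_Ioi]
    exact fun y hy => ((keyf y hy).differentiableAt).differentiableWithinAt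
  · rw [interior_Ioi]
    intro y hy
    have hev : deriv (fun y : ℝ => Real.log (y + c) - Real.log (y + d))
        =ᶠ[nhds y] (fun y => (y + c)⁻¹ - (y + d)⁻¹) := by
      filter_upwards [IsOpen.mem_nhds isOpen_Ioi hy] with z hz using hderiv z hz
    have : HasDerivAt (deriv (fun y : ℝ => Real.log (y + c) - Real.log (y + d)))
        (-((y+c)^2)⁻¹ - -((y+d)^2)⁻¹) y := by
      refine HasDerivAt.congr_of_eventuallyEq ?_ hev
      exact (key2 c hc y hy).sub (key2 d hd y hy)
    exact this.differentiableAt.differentiableWithinAt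
  · rw [interior_Ioi]
    intro y hy
    have hev : deriv (fun y : ℝ => Real.log (y + c) - Real.log (y + d))
        =ᶠ[nhds y] (fun y => (y + c)⁻¹ - (y + d)⁻¹) := by
      filter_upwards [IsOpen.mem_nhds isOpen_Ioi hy] with z hz using hderiv z hz
    have h2 : HasDerivAt (deriv (fun y : ℝ => Real.log (y + c) - Real.log (y + d)))
        (-((y+c)^2)⁻¹ - -((y+d)^2)⁻¹) y := by
      refine HasDerivAt.congr_of_eventuallyEq ?_ hev
      exact (key2 c hc y hy).sub (key2 d hd y hy)
    have := h2.deriv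
    simp only [Function.iterate_succ, Function.iterate_zero, Function.comp_apply, id_eq]
    rw [this]
    have h1 : (0:ℝ) < y + d := by simp at hy; linarith
    have h2' : (0:ℝ) < y + c := by linarith
    have : ((y+c)^2)⁻¹ ≤ ((y+d)^2)⁻¹ := by
      apply inv_anti₀ (by positivity)
      nlinarith
    linarith

lemma affine_convex (A B : ℝ) : ConvexOn ℝ (Set.Ioi (0:ℝ)) (fun y => A + B * y) := by
  refine ⟨convex_Ioi 0, ?_⟩
  intro a _ b _ s t hs ht hst
  simp only [smul_eq_mul]
  have h : s * (A + B * a) + t * (A + B * b) = A + B * (s * a + t * b) := by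
    linear_combination A * hst
  linarith

lemma key_list {p : ℝ} (hp : 0 < p) (n : ℕ) :
    ∀ l : List ℝ, l.length = n → (∀ c ∈ l, 0 ≤ c) →
    (∀ s : ℝ, 0 ≤ s → (l.countP (fun c => decide (c ≤ s)) : ℤ) ≤ ⌊s / p⌋ + 1) →
    ConvexOn ℝ (Set.Ioi (0:ℝ))
      (fun y => (l.map (fun c => Real.log (y + c))).sum
        - ∑ m ∈ Finset.range l.length, Real.log (y + p * m)) := by
  induction n with
  | zero =>
    intro l hl _ _
    rw [List.length_eq_zero_iff] at hl
    subst hl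
    simpa using convexOn_const (0:ℝ) (convex_Ioi 0)
  | succ n ih =>
    intro l hl hpos hcount
    have hne : l ≠ [] := by intro h; subst h; simp at hl
    obtain ⟨a, ha⟩ : ∃ a : ℝ, l.maximum = a := by
      cases hmax : l.maximum with
      | bot => exact absurd (List.maximum_eq_bot.mp hmax) hne
      | coe a => exact ⟨a, rfl⟩
    have amem : a ∈ l := List.maximum_mem ha
    have amax : ∀ b ∈ l, b ≤ a := fun b hb => by
      exact_mod_cast List.le_maximum_of_mem hb ha
    have ha0 : 0 ≤ a := hpos a amem
    set l' := l.erase a with hl'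
    have perm : List.Perm l (a :: l') := List.perm_cons_erase amem
    have hlen' : l'.length = n := by
      have := perm.length_eq
      rw [hl] at this
      simpa using this.symm
    -- p * n ≤ a
    have hpn : p * n ≤ a := by
      have hc := hcount a ha0
      have hall : l.countP (fun c => decide (c ≤ a)) = l.length :=
        List.countP_eq_length.mpr (fun b hb => decide_eq_true (amax b hb))
      rw [hall, hl] at hc
      have hfl : (n : ℤ) ≤ ⌊a / p⌋ := by push_cast at hc; omega
      have := (Int.le_floor).mp hfl
      rw [le_div_iff₀ hp] at this
      push_cast at this
      linarith
    have hpos' : ∀ c ∈ l', 0 ≤ c := fun c hc => hpos c (List.mem_of_mem_erase hc)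
    have hcount' : ∀ s : ℝ, 0 ≤ s →
        (l'.countP (fun c => decide (c ≤ s)) : ℤ) ≤ ⌊s / p⌋ + 1 := by
      intro s hs
      have hsub : l'.countP (fun c => decide (c ≤ s)) ≤ l.countP (fun c => decide (c ≤ s)) :=
        (List.erase_sublist (a := a) (l := l)).countP_le
      calc ((l'.countP (fun c => decide (c ≤ s)) : ℤ)) ≤ _ := by exact_mod_cast hsub
        _ ≤ ⌊s / p⌋ + 1 := hcount s hs
    have IH := ih l' hlen' hpos' hcount'
    have hfun : (fun y : ℝ => (l.map (fun c => Real.log (y + c))).sum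
          - ∑ m ∈ Finset.range l.length, Real.log (y + p * m))
        = fun y => ((l'.map (fun c => Real.log (y + c))).sum
            - ∑ m ∈ Finset.range l'.length, Real.log (y + p * m))
          + (Real.log (y + a) - Real.log (y + p * n)) := by
      funext y
      have h1 : (l.map (fun c => Real.log (y + c))).sum
          = Real.log (y + a) + (l'.map (fun c => Real.log (y + c))).sum := by
        have := (perm.map (fun c => Real.log (y + c))).sum_eq
        simpa using this
      rw [hl, hlen', Finset.sum_range_succ, h1]
      ring
    rw [hfun]
    exact IH.add (pair_convex (by positivity) hpn)

lemma list_range_sum (f : ℕ → ℝ) (n : ℕ) :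
    ((List.range n).map f).sum = ∑ j ∈ Finset.range n, f j := by
  induction n with
  | zero => simp
  | succ n ih => rw [List.range_succ, Finset.sum_range_succ]; simp [ih]

lemma log_GammaSeq {s : ℝ} (hs : 0 < s) {n : ℕ} (hn : 1 ≤ n) :
    Real.log (Real.GammaSeq s n)
      = s * Real.log n + Real.log (n.factorial : ℝ)
        - ∑ j ∈ Finset.range (n + 1), Real.log (s + j) := by
  have hn0 : (0:ℝ) < n := by exact_mod_cast hn
  have hfact : (n.factorial : ℝ) ≠ 0 := by positivity
  have hrpow : (n:ℝ) ^ s ≠ 0 := by positivity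
  have hterm : ∀ j ∈ Finset.range (n+1), s + (j:ℝ) ≠ 0 := by
    intro j _; positivity
  have hprod : (∏ j ∈ Finset.range (n+1), (s + (j:ℝ))) ≠ 0 := by
    apply Finset.prod_ne_zero_iff.mpr hterm
  rw [Real.GammaSeq, Real.log_div (by positivity) hprod, Real.log_mul hrpow hfact,
    Real.log_rpow hn0, Real.log_prod hterm]

lemma countP_range_le {N K : ℕ} {P : ℕ → Bool} (h : ∀ j, P j = true → j < K) :
    (List.range N).countP P ≤ K := by
  rw [List.countP_eq_length_filter]
  have hnd : ((List.range N).filter P).Nodup := (List.nodup_range (n := N)).filter P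
  have hsub : ((List.range N).filter P).toFinset ⊆ Finset.range K := by
    intro j hj
    rw [List.mem_toFinset, List.mem_filter] at hj
    exact Finset.mem_range.mpr (h j hj.2)
  have := Finset.card_le_card hsub
  rwa [List.toFinset_card_of_nodup hnd, Finset.card_range] at this

noncomputable def auxList (r : ℝ) (x n : ℕ) : List ℝ :=
  ((List.range (n+1)).map fun j : ℕ => r * (j:ℝ)) ++ ((List.range (n+1)).map fun j : ℕ => (x:ℝ) + (j:ℝ))

lemma auxList_length (r : ℝ) (x n : ℕ) : (auxList r x n).length = 2*n+1+1 := by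
  simp [auxList]; omega

lemma auxList_nonneg {r : ℝ} (hr : 0 ≤ r) {x n : ℕ} : ∀ c ∈ auxList r x n, 0 ≤ c := by
  intro c hc
  rw [auxList, List.mem_append] at hc
  rcases hc with hc | hc <;> obtain ⟨j, _, rfl⟩ := List.mem_map.mp hc <;> positivity

lemma auxList_count {p : ℝ} (hp0 : 0 < p) (hp1 : p < 1) {x : ℕ} (hx : 1 ≤ x) (n : ℕ)
    (s : ℝ) (hs : 0 ≤ s) :
    ((auxList (p/(1-p)) x n).countP (fun c => decide (c ≤ s)) : ℤ) ≤ ⌊s / p⌋ + 1 := by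
  have hq : 0 < 1 - p := by linarith
  rw [auxList, List.countP_append, List.countP_map, List.countP_map]
  have h1 : (List.range (n+1)).countP ((fun c => decide (c ≤ s)) ∘ (fun j : ℕ => p/(1-p) * (j:ℝ)))
      ≤ (⌊s*(1-p)/p⌋).toNat + 1 := by
    apply countP_range_le
    intro j hj
    have hj' : p/(1-p) * (j:ℝ) ≤ s := by
      simpa using of_decide_eq_true hj
    have hjle : (j:ℝ) ≤ s*(1-p)/p := by
      rw [le_div_iff₀ hp0]
      calc (j:ℝ) * p = (p/(1-p) * j) * (1-p) := by field_simp
        _ ≤ s * (1-p) := by nlinarith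
    have : (j:ℤ) ≤ ⌊s*(1-p)/p⌋ := Int.le_floor.mpr (by exact_mod_cast hjle)
    omega
  have h2 : (List.range (n+1)).countP ((fun c => decide (c ≤ s)) ∘ (fun j : ℕ => (x:ℝ) + (j:ℝ)))
      ≤ (⌊s⌋).toNat := by
    apply countP_range_le
    intro j hj
    have hj' : (x:ℝ) + j ≤ s := by simpa using of_decide_eq_true hj
    have hx1 : (1:ℝ) ≤ (x:ℝ) := by exact_mod_cast hx
    have : ((j:ℤ) + 1 : ℤ) ≤ ⌊s⌋ := Int.le_floor.mpr (by push_cast; linarith)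
    omega
  have hfl1 : (0:ℤ) ≤ ⌊s*(1-p)/p⌋ := Int.floor_nonneg.mpr (by positivity)
  have hfl2 : (0:ℤ) ≤ ⌊s⌋ := Int.floor_nonneg.mpr hs
  have hadd : ⌊s*(1-p)/p⌋ + ⌊s⌋ ≤ ⌊s/p⌋ := by
    apply Int.le_floor.mpr
    push_cast
    have e : s/p = s*(1-p)/p + s := by field_simp; ring
    rw [e]
    have := Int.floor_le (s*(1-p)/p)
    have := Int.floor_le s
    linarith
  have := h1
  have := h2
  push_cast
  omega

lemma F_eq {p : ℝ} (hp0 : 0 < p) (hp1 : p < 1) {x : ℕ} (hx : 1 ≤ x) {n : ℕ} (hn : 1 ≤ n) :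
    ∃ A B : ℝ, ∀ y : ℝ, 0 < y →
      Real.log (Real.GammaSeq (y/p) (2*n+1)) - Real.log (Real.GammaSeq (y*(1-p)/p) n)
        - Real.log (Real.GammaSeq (y + x) n) + Real.log (Real.Gamma x)
      = (A + B * y)
        + (((auxList (p/(1-p)) x n).map (fun c => Real.log (y + c))).sum
          - ∑ m ∈ Finset.range (auxList (p/(1-p)) x n).length, Real.log (y + p * m)) := by
  have hq : 0 < 1 - p := by linarith
  refine ⟨Real.log ((2*n+1).factorial : ℝ) - 2 * Real.log (n.factorial : ℝ)
      + Real.log (Real.Gamma x) - (x : ℝ) * Real.log n + (2*(n:ℝ)+2) * Real.log p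
      + ((n:ℝ)+1) * Real.log ((1-p)/p),
    Real.log ((2*n+1 : ℕ) : ℝ) / p - (1-p) * Real.log n / p - Real.log n, ?_⟩
  intro y hy
  have hx0 : (0:ℝ) < x := by exact_mod_cast hx
  have h1 := log_GammaSeq (s := y/p) (by positivity) (n := 2*n+1) (by omega)
  have h2 := log_GammaSeq (s := y*(1-p)/p) (by positivity) hn
  have h3 := log_GammaSeq (s := y + x) (by positivity) hn
  have e1 : ∑ j ∈ Finset.range (2*n+1+1), Real.log (y/p + j)
      = (∑ j ∈ Finset.range (2*n+1+1), Real.log (y + p*j)) - (2*(n:ℝ)+2) * Real.log p := by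
    have he : ∀ j ∈ Finset.range (2*n+1+1),
        Real.log (y/p + j) = Real.log (y + p*j) - Real.log p := by
      intro j _
      rw [← Real.log_div (by positivity) (ne_of_gt hp0)]
      congr 1
      field_simp
    rw [Finset.sum_congr rfl he, Finset.sum_sub_distrib, Finset.sum_const, Finset.card_range]
    push_cast
    ring
  have e2 : ∑ j ∈ Finset.range (n+1), Real.log (y*(1-p)/p + j)
      = (∑ j ∈ Finset.range (n+1), Real.log (y + p/(1-p)*j)) + ((n:ℝ)+1) * Real.log ((1-p)/p) := by
    have he : ∀ j ∈ Finset.range (n+1),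
        Real.log (y*(1-p)/p + j) = Real.log (y + p/(1-p)*j) + Real.log ((1-p)/p) := by
      intro j _
      rw [← Real.log_mul (by positivity) (by positivity)]
      congr 1
      field_simp
    rw [Finset.sum_congr rfl he, Finset.sum_add_distrib, Finset.sum_const, Finset.card_range]
    push_cast
    ring
  have hsum : ((auxList (p/(1-p)) x n).map (fun c => Real.log (y + c))).sum
      = (∑ j ∈ Finset.range (n+1), Real.log (y + p/(1-p)*j))
        + (∑ j ∈ Finset.range (n+1), Real.log (y + x + j)) := by
    rw [auxList, List.map_append, List.sum_append, List.map_map, List.map_map,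
      list_range_sum, list_range_sum]
    simp only [Function.comp]
    congr 1
    apply Finset.sum_congr rfl
    intro j _
    rw [add_assoc]
  rw [h1, h2, h3, e1, e2, hsum, auxList_length]
  push_cast
  ring

theorem fx_convex (p : ℝ) (hp : p ∈ Set.Ioo (0:ℝ) 1) (x : ℕ) (hx : 1 ≤ x) :
    ConvexOn ℝ (Set.Ioi (0:ℝ))
      (fun y : ℝ => Real.log (genBinom (y / p - 1) y / genBinom (y + x - 1) y)) := by
  obtain ⟨hp0, hp1⟩ := hp
  have hq : 0 < 1 - p := by linarith
  have hx0 : (0:ℝ) < x := by exact_mod_cast hx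
  set F : ℕ → ℝ → ℝ := fun n y => Real.log (Real.GammaSeq (y/p) (2*n+1))
      - Real.log (Real.GammaSeq (y*(1-p)/p) n)
      - Real.log (Real.GammaSeq (y + x) n) + Real.log (Real.Gamma x) with hF
  set g : ℝ → ℝ := fun y => Real.log (Real.Gamma (y/p)) - Real.log (Real.Gamma (y*(1-p)/p))
      - Real.log (Real.Gamma (y + x)) + Real.log (Real.Gamma x) with hg
  have hFconv : ∀ n : ℕ, 1 ≤ n → ConvexOn ℝ (Set.Ioi (0:ℝ)) (F n) := by
    intro n hn
    obtain ⟨A, B, hAB⟩ := F_eq hp0 hp1 hx hn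
    have hr0 : (0:ℝ) ≤ p / (1-p) := le_of_lt (by positivity)
    have hconv := (affine_convex A B).add
      (key_list hp0 ((auxList (p/(1-p)) x n).length) (auxList (p/(1-p)) x n) rfl
        (auxList_nonneg hr0) (auxList_count hp0 hp1 hx n))
    exact hconv.congr (fun y hy => by simpa using (hAB y hy).symm)
  have hFlim : ∀ y : ℝ, 0 < y → Tendsto (fun n => F n y) atTop (𝓝 (g y)) := by
    intro y hy
    have hy1 : (0:ℝ) < y / p := by positivity
    have hy2 : (0:ℝ) < y * (1-p) / p := by positivity
    have hy3 : (0:ℝ) < y + x := by positivity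
    have t0 : Tendsto (fun n : ℕ => 2*n+1) atTop atTop :=
      tendsto_atTop_mono (fun n => by simpa using (by omega : n ≤ 2*n+1)) tendsto_id
    have l1 : Tendsto (fun n => Real.log (Real.GammaSeq (y/p) (2*n+1))) atTop
        (𝓝 (Real.log (Real.Gamma (y/p)))) :=
      ((Real.continuousAt_log (Real.Gamma_pos_of_pos hy1).ne').tendsto).comp
        ((Real.GammaSeq_tendsto_Gamma (y/p)).comp t0)
    have l2 : Tendsto (fun n => Real.log (Real.GammaSeq (y*(1-p)/p) n)) atTop
        (𝓝 (Real.log (Real.Gamma (y*(1-p)/p)))) :=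
      ((Real.continuousAt_log (Real.Gamma_pos_of_pos hy2).ne').tendsto).comp
        (Real.GammaSeq_tendsto_Gamma _)
    have l3 : Tendsto (fun n => Real.log (Real.GammaSeq (y + x) n)) atTop
        (𝓝 (Real.log (Real.Gamma (y + x)))) :=
      ((Real.continuousAt_log (Real.Gamma_pos_of_pos hy3).ne').tendsto).comp
        (Real.GammaSeq_tendsto_Gamma _)
    exact ((l1.sub l2).sub l3).add tendsto_const_nhds
  have hgconv : ConvexOn ℝ (Set.Ioi (0:ℝ)) g := by
    refine ⟨convex_Ioi 0, ?_⟩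
    intro a ha b hb s t hs ht hst
    have hmem : s • a + t • b ∈ Set.Ioi (0:ℝ) := (convex_Ioi 0) ha hb hs ht hst
    refine le_of_tendsto_of_tendsto (hFlim _ hmem)
      (((hFlim a ha).const_mul s).add ((hFlim b hb).const_mul t)) ?_
    filter_upwards [eventually_ge_atTop 1] with n hn
    have := (hFconv n hn).2 ha hb hs ht hst
    simpa [smul_eq_mul] using this
  apply hgconv.congr
  intro y hy
  dsimp only
  have hy0 : (0:ℝ) < y := hy
  have hy1 : (0:ℝ) < y / p := by positivity
  have hy2 : (0:ℝ) < y * (1-p) / p := by positivity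
  have hy3 : (0:ℝ) < y + x := by positivity
  have hG1 := Real.Gamma_pos_of_pos hy1
  have hG2 := Real.Gamma_pos_of_pos hy2
  have hG3 := Real.Gamma_pos_of_pos hy3
  have hG4 := Real.Gamma_pos_of_pos hx0
  have hG5 := Real.Gamma_pos_of_pos (by positivity : (0:ℝ) < y + 1)
  have hb1 : genBinom (y/p - 1) y
      = Real.Gamma (y/p) / (Real.Gamma (y+1) * Real.Gamma (y*(1-p)/p)) := by
    rw [genBinom, show y/p - 1 + 1 = y/p by ring,
      show y/p - 1 - y + 1 = y*(1-p)/p by field_simp; ring]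
  have hb2 : genBinom (y + x - 1) y
      = Real.Gamma (y + x) / (Real.Gamma (y+1) * Real.Gamma x) := by
    rw [genBinom, show y + (x:ℝ) - 1 + 1 = y + x by ring,
      show y + (x:ℝ) - 1 - y + 1 = (x:ℝ) by ring]
  have hratio : genBinom (y/p - 1) y / genBinom (y + x - 1) y
      = Real.Gamma (y/p) * Real.Gamma x / (Real.Gamma (y*(1-p)/p) * Real.Gamma (y + x)) := by
    rw [hb1, hb2]
    field_simp
  rw [hratio, Real.log_div (by positivity) (by positivity),
    Real.log_mul hG1.ne' hG4.ne', Real.log_mul hG2.ne' hG3.ne']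
  ring
end
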